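/- Let Φ be a Leonard system acting on V with parameter array ({θ_i}; {θ*_i}; {φ_i}; {ϕ_i}) and nonzero ξ*_0 ∈ E*_0V, ξ_0 ∈ E_0V with bilinear form ⟨·,·⟩. Then for 0 ≤ r, i ≤ d: (1/tr(E_0E*_0)) · (E*_0 E_0 τ*_r(A*)/(φ_1⋯φ_r)) · τ_i(A) E*_0 = δ_{ri} E*_0. Consequently (⟨ξ_0,ξ_0⟩/⟨ξ_0,ξ*_0⟩) ∑_{r=0}^d X_r E_0 τ*_r(A*)/(φ_1⋯φ_r) maps τ_i(A)ξ*_0 to X_iξ_0, where X_0,…,X_d is any of the families {E*_i}, {E*_{d−i}}, {τ*_i(A*)}, {τ*_{d−i}(A*)}, {η*_i(A*)}, {η*_{d−i}(A*)}. -/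

import Mathlib

open Matrix Polynomial

/-- A Leonard system in the matrix algebra `Mat_{d+1}(K)`: multiplicity-free
elements `A`, `Astar` with orderings `E`, `Estar` of their primitive idempotents
satisfying the irreducible-tridiagonality conditions. -/
structure LeonardSystem (K : Type*) [Field K] (d : ℕ) where
  A : Matrix (Fin (d+1)) (Fin (d+1)) K
  Astar : Matrix (Fin (d+1)) (Fin (d+1)) K
  E : Fin (d+1) → Matrix (Fin (d+1)) (Fin (d+1)) K
  Estar : Fin (d+1) → Matrix (Fin (d+1)) (Fin (d+1)) K
  θ : Fin (d+1) → K
  θs : Fin (d+1) → K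
  θ_inj : Function.Injective θ
  θs_inj : Function.Injective θs
  E_ne : ∀ i, E i ≠ 0
  Es_ne : ∀ i, Estar i ≠ 0
  E_mul : ∀ i j, E i * E j = if i = j then E i else 0
  Es_mul : ∀ i j, Estar i * Estar j = if i = j then Estar i else 0
  E_sum : ∑ i, E i = 1
  Es_sum : ∑ i, Estar i = 1
  A_eq : A = ∑ i, θ i • E i
  As_eq : Astar = ∑ i, θs i • Estar i
  trid0 : ∀ i j : Fin (d+1), ((i : ℤ) - (j : ℤ)).natAbs > 1 → E i * Astar * E j = 0
  trid1 : ∀ i j : Fin (d+1), ((i : ℤ) - (j : ℤ)).natAbs = 1 → E i * Astar * E j ≠ 0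
  strid0 : ∀ i j : Fin (d+1), ((i : ℤ) - (j : ℤ)).natAbs > 1 → Estar i * A * Estar j = 0
  strid1 : ∀ i j : Fin (d+1), ((i : ℤ) - (j : ℤ)).natAbs = 1 → Estar i * A * Estar j ≠ 0

namespace LeonardSystem

variable {K : Type*} [Field K] {d : ℕ}

/-- Eigenvalues indexed by `ℕ` (junk value outside range). -/
def θN (L : LeonardSystem K d) (i : ℕ) : K := if h : i < d + 1 then L.θ ⟨i, h⟩ else 0

def θsN (L : LeonardSystem K d) (i : ℕ) : K := if h : i < d + 1 then L.θs ⟨i, h⟩ else 0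

/-- `τ_i(A) = (A-θ₀)(A-θ₁)⋯(A-θ_{i-1})`. -/
def tauA (L : LeonardSystem K d) : ℕ → Matrix (Fin (d+1)) (Fin (d+1)) K
  | 0 => 1
  | i + 1 => L.tauA i * (L.A - L.θN i • 1)

/-- `η_i(A) = (A-θ_d)(A-θ_{d-1})⋯(A-θ_{d-i+1})`. -/
def etaA (L : LeonardSystem K d) : ℕ → Matrix (Fin (d+1)) (Fin (d+1)) K
  | 0 => 1
  | i + 1 => L.etaA i * (L.A - L.θN (d - i) • 1)

/-- `τ*_i(A*)`. -/
def tausA (L : LeonardSystem K d) : ℕ → Matrix (Fin (d+1)) (Fin (d+1)) K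
  | 0 => 1
  | i + 1 => L.tausA i * (L.Astar - L.θsN i • 1)

/-- `η*_i(A*)`. -/
def etasA (L : LeonardSystem K d) : ℕ → Matrix (Fin (d+1)) (Fin (d+1)) K
  | 0 => 1
  | i + 1 => L.etasA i * (L.Astar - L.θsN (d - i) • 1)

/-- Scalar `τ_i(x)`. -/
def tauS (L : LeonardSystem K d) (i : ℕ) (x : K) : K := ∏ j ∈ Finset.range i, (x - L.θN j)

/-- Scalar `η_i(x)`. -/
def etaS (L : LeonardSystem K d) (i : ℕ) (x : K) : K := ∏ j ∈ Finset.range i, (x - L.θN (d - j))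

/-- Scalar `τ*_i(x)`. -/
def tausS (L : LeonardSystem K d) (i : ℕ) (x : K) : K := ∏ j ∈ Finset.range i, (x - L.θsN j)

/-- Scalar `η*_i(x)`. -/
def etasS (L : LeonardSystem K d) (i : ℕ) (x : K) : K := ∏ j ∈ Finset.range i, (x - L.θsN (d - j))

/-- First split sequence `φ_i`. -/
noncomputable def varphi (L : LeonardSystem K d) (i : ℕ) : K :=
  (L.θsN 0 - L.θsN i) * (L.tauA i * L.Estar 0).trace / (L.tauA (i-1) * L.Estar 0).trace

/-- Second split sequence `ϕ_i`. -/
noncomputable def phi (L : LeonardSystem K d) (i : ℕ) : K :=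
  (L.θsN 0 - L.θsN i) * (L.etaA i * L.Estar 0).trace / (L.etaA (i-1) * L.Estar 0).trace

/-- `φ₁φ₂⋯φ_r`. -/
noncomputable def varphiProd (L : LeonardSystem K d) (r : ℕ) : K :=
  ∏ j ∈ Finset.range r, L.varphi (j + 1)

/-- `ϕ₁ϕ₂⋯ϕ_r`. -/
noncomputable def phiProd (L : LeonardSystem K d) (r : ℕ) : K :=
  ∏ j ∈ Finset.range r, L.phi (j + 1)

/-- `φ_d φ_{d-1} ⋯ φ_{d-r+1}`. -/
noncomputable def varphiRevProd (L : LeonardSystem K d) (r : ℕ) : K :=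
  ∏ j ∈ Finset.range r, L.varphi (d - j)

/-- `ϕ_d ϕ_{d-1} ⋯ ϕ_{d-r+1}`. -/
noncomputable def phiRevProd (L : LeonardSystem K d) (r : ℕ) : K :=
  ∏ j ∈ Finset.range r, L.phi (d - j)

end LeonardSystem

namespace LeonardSystem

variable {K : Type*} [Field K] {d : ℕ}

/-! ### Generic helpers -/

theorem sum_mulVec' {ι : Type*} (s : Finset ι) (M : ι → Matrix (Fin (d+1)) (Fin (d+1)) K)
    (v : Fin (d+1) → K) : (∑ i ∈ s, M i) *ᵥ v = ∑ i ∈ s, M i *ᵥ v := by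
  ext x
  simp only [Matrix.mulVec, dotProduct, Finset.sum_apply, Matrix.sum_apply,
    Finset.sum_mul]
  rw [Finset.sum_comm]

theorem mulVec_sum'' {ι : Type*} (s : Finset ι) (M : Matrix (Fin (d+1)) (Fin (d+1)) K)
    (v : ι → Fin (d+1) → K) : M *ᵥ (∑ i ∈ s, v i) = ∑ i ∈ s, M *ᵥ (v i) := by
  ext x
  simp only [Matrix.mulVec, dotProduct, Finset.sum_apply, Finset.mul_sum]
  rw [Finset.sum_comm]

theorem mulVec_sub'' (M : Matrix (Fin (d+1)) (Fin (d+1)) K) (x y : Fin (d+1) → K) :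
    M *ᵥ (x - y) = M *ᵥ x - M *ᵥ y := by
  simpa using map_sub M.mulVecLin x y

theorem exists_mulVec_ne {M : Matrix (Fin (d+1)) (Fin (d+1)) K} (h : M ≠ 0) :
    ∃ v, M *ᵥ v ≠ 0 := by
  by_contra hc
  push_neg at hc
  apply h
  ext x y
  have := congrFun (hc (Pi.single y 1)) x
  simpa [Matrix.mulVec_single] using this

variable (L : LeonardSystem K d)

/-! ### Eigenvalue basics -/

theorem θN_eq {n : ℕ} (h : n ≤ d) : L.θN n = L.θ ⟨n, by omega⟩ := dif_pos (by omega)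

theorem θsN_eq {n : ℕ} (h : n ≤ d) : L.θsN n = L.θs ⟨n, by omega⟩ := dif_pos (by omega)

theorem θ_sub_ne {j : Fin (d+1)} {s : ℕ} (hs : s ≤ d) (hne : (j:ℕ) ≠ s) :
    L.θ j - L.θN s ≠ 0 := by
  rw [L.θN_eq hs, sub_ne_zero]
  intro hc
  exact hne (by simpa [Fin.ext_iff] using L.θ_inj hc)

theorem θs_sub_ne {j : Fin (d+1)} {s : ℕ} (hs : s ≤ d) (hne : (j:ℕ) ≠ s) :
    L.θs j - L.θsN s ≠ 0 := by
  rw [L.θsN_eq hs, sub_ne_zero]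
  intro hc
  exact hne (by simpa [Fin.ext_iff] using L.θs_inj hc)

/-! ### The dual system -/

def dual (L : LeonardSystem K d) : LeonardSystem K d where
  A := L.Astar
  Astar := L.A
  E := L.Estar
  Estar := L.E
  θ := L.θs
  θs := L.θ
  θ_inj := L.θs_inj
  θs_inj := L.θ_inj
  E_ne := L.Es_ne
  Es_ne := L.E_ne
  E_mul := L.Es_mul
  Es_mul := L.E_mul
  E_sum := L.Es_sum
  Es_sum := L.E_sum
  A_eq := L.As_eq
  As_eq := L.A_eq
  trid0 := L.strid0
  trid1 := L.strid1
  strid0 := L.trid0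
  strid1 := L.trid1

@[simp] theorem dual_A : L.dual.A = L.Astar := rfl
@[simp] theorem dual_Astar : L.dual.Astar = L.A := rfl
@[simp] theorem dual_E : L.dual.E = L.Estar := rfl
@[simp] theorem dual_Estar : L.dual.Estar = L.E := rfl
@[simp] theorem dual_θ : L.dual.θ = L.θs := rfl
@[simp] theorem dual_θs : L.dual.θs = L.θ := rfl
@[simp] theorem dual_θN : L.dual.θN = L.θsN := rfl
@[simp] theorem dual_θsN : L.dual.θsN = L.θN := rfl

@[simp] theorem dual_tauA (n : ℕ) : L.dual.tauA n = L.tausA n := by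
  induction n with
  | zero => rfl
  | succ n ih => show L.dual.tauA n * _ = _; rw [ih]; rfl

@[simp] theorem dual_tauS (n : ℕ) (x : K) : L.dual.tauS n x = L.tausS n x := rfl

/-! ### Idempotent, eigen and polynomial basics -/

theorem Es_idem (j : Fin (d+1)) : L.Estar j * L.Estar j = L.Estar j := by
  rw [L.Es_mul, if_pos rfl]

theorem A_mul_E (j : Fin (d+1)) : L.A * L.E j = L.θ j • L.E j := by
  rw [L.A_eq, Finset.sum_mul, Finset.sum_eq_single j]
  · rw [Matrix.smul_mul, L.E_mul, if_pos rfl]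
  · intro b _ hb
    rw [Matrix.smul_mul, L.E_mul, if_neg hb, smul_zero]
  · intro h; exact absurd (Finset.mem_univ j) h

theorem E_mul_A (j : Fin (d+1)) : L.E j * L.A = L.θ j • L.E j := by
  rw [L.A_eq, Finset.mul_sum, Finset.sum_eq_single j]
  · rw [Matrix.mul_smul, L.E_mul, if_pos rfl]
  · intro b _ hb
    rw [Matrix.mul_smul, L.E_mul, if_neg (fun hc => hb hc.symm), smul_zero]
  · intro h; exact absurd (Finset.mem_univ j) h

theorem As_mul_Es (j : Fin (d+1)) : L.Astar * L.Estar j = L.θs j • L.Estar j :=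
  L.dual.A_mul_E j

theorem Es_mul_As (j : Fin (d+1)) : L.Estar j * L.Astar = L.θs j • L.Estar j :=
  L.dual.E_mul_A j

theorem A_comm_tauA (n : ℕ) : L.A * L.tauA n = L.tauA n * L.A := by
  induction n with
  | zero => show L.A * 1 = 1 * L.A; rw [Matrix.mul_one, Matrix.one_mul]
  | succ n ih =>
    show L.A * (L.tauA n * _) = L.tauA n * _ * _
    rw [← Matrix.mul_assoc, ih, Matrix.mul_assoc, Matrix.mul_assoc]
    congr 1
    rw [Matrix.mul_sub, Matrix.sub_mul, Matrix.mul_smul, Matrix.smul_mul,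
      Matrix.mul_one, Matrix.one_mul]

theorem tauA_succ' (n : ℕ) : L.tauA (n+1) = (L.A - L.θN n • 1) * L.tauA n := by
  show L.tauA n * _ = _
  rw [Matrix.mul_sub, Matrix.sub_mul, ← L.A_comm_tauA, Matrix.mul_smul, Matrix.smul_mul,
    Matrix.mul_one, Matrix.one_mul]

theorem tauA_mul_E (n : ℕ) (j : Fin (d+1)) :
    L.tauA n * L.E j = L.tauS n (L.θ j) • L.E j := by
  induction n with
  | zero =>
    show (1 : Matrix _ _ K) * _ = _
    rw [Matrix.one_mul]
    simp [tauS]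
  | succ n ih =>
    show L.tauA n * _ * _ = _
    rw [Matrix.mul_assoc, Matrix.sub_mul, Matrix.smul_mul, Matrix.one_mul, L.A_mul_E,
      ← sub_smul, Matrix.mul_smul, ih, smul_smul]
    have : L.tauS (n+1) (L.θ j) = L.tauS n (L.θ j) * (L.θ j - L.θN n) := by
      rw [tauS, Finset.prod_range_succ]; rfl
    rw [this, mul_comm (L.tauS n (L.θ j))]

theorem E_mul_tauA (n : ℕ) (j : Fin (d+1)) :
    L.E j * L.tauA n = L.tauS n (L.θ j) • L.E j := by
  induction n with
  | zero =>
    show _ * (1 : Matrix _ _ K) = _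
    rw [Matrix.mul_one]
    simp [tauS]
  | succ n ih =>
    show L.E j * (L.tauA n * _) = _
    rw [← Matrix.mul_assoc, ih, Matrix.smul_mul, Matrix.mul_sub, Matrix.mul_smul,
      Matrix.mul_one, L.E_mul_A, ← sub_smul, smul_smul]
    have : L.tauS (n+1) (L.θ j) = L.tauS n (L.θ j) * (L.θ j - L.θN n) := by
      rw [tauS, Finset.prod_range_succ]; rfl
    rw [this]

theorem tausA_mul_Es (n : ℕ) (j : Fin (d+1)) :
    L.tausA n * L.Estar j = L.tausS n (L.θs j) • L.Estar j := by
  simpa using L.dual.tauA_mul_E n j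

theorem Es_mul_tausA (n : ℕ) (j : Fin (d+1)) :
    L.Estar j * L.tausA n = L.tausS n (L.θs j) • L.Estar j := by
  simpa using L.dual.E_mul_tauA n j

theorem tauS_eq_zero {n : ℕ} {j : Fin (d+1)} (hkn : (j:ℕ) < n) : L.tauS n (L.θ j) = 0 :=
  Finset.prod_eq_zero (Finset.mem_range.mpr hkn)
    (by rw [L.θN_eq (by omega)]; simp)

theorem tauS_ne_zero {n : ℕ} {j : Fin (d+1)} (hn : n ≤ (j:ℕ)) : L.tauS n (L.θ j) ≠ 0 := by
  apply Finset.prod_ne_zero_iff.mpr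
  intro s hs
  have hs' := Finset.mem_range.mp hs
  have hj : (j:ℕ) ≤ d := by omega
  exact L.θ_sub_ne (by omega) (by omega)

theorem tausS_eq_zero {n : ℕ} {j : Fin (d+1)} (hkn : (j:ℕ) < n) : L.tausS n (L.θs j) = 0 :=
  L.dual.tauS_eq_zero hkn

theorem tausS_ne_zero {n : ℕ} {j : Fin (d+1)} (hn : n ≤ (j:ℕ)) : L.tausS n (L.θs j) ≠ 0 :=
  L.dual.tauS_ne_zero hn

theorem tauA_charpoly : L.tauA (d+1) = 0 := by
  have h : L.tauA (d+1) * (∑ j, L.E j) = 0 := by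
    rw [Finset.mul_sum]
    apply Finset.sum_eq_zero
    intro j _
    rw [L.tauA_mul_E, L.tauS_eq_zero (by omega), zero_smul]
  rwa [L.E_sum, Matrix.mul_one] at h

theorem tauA_zero_of_gt {n : ℕ} (h : d+1 ≤ n) : L.tauA n = 0 := by
  obtain ⟨m, rfl⟩ : ∃ m, n = (d+1) + m := ⟨n - (d+1), by omega⟩
  induction m with
  | zero => exact L.tauA_charpoly
  | succ m ih =>
    show L.tauA ((d+1)+m) * _ = 0
    rw [ih (by omega), Matrix.zero_mul]

theorem A_pow_eq (n : ℕ) : L.A ^ n = ∑ j, (L.θ j)^n • L.E j := by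
  induction n with
  | zero => simp only [pow_zero, one_smul]; exact L.E_sum.symm
  | succ n ih =>
    rw [pow_succ, ih, Finset.sum_mul]
    apply Finset.sum_congr rfl
    intro j _
    rw [Matrix.smul_mul, L.E_mul_A, smul_smul, ← pow_succ]

theorem aeval_A (p : K[X]) :
    Polynomial.aeval L.A p = ∑ j, p.eval (L.θ j) • L.E j := by
  induction p using Polynomial.induction_on' with
  | add p q hp hq =>
    rw [map_add, hp, hq, ← Finset.sum_add_distrib]
    apply Finset.sum_congr rfl
    intro j _
    rw [Polynomial.eval_add, add_smul]
  | monomial n a =>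
    rw [Polynomial.aeval_monomial, ← Algebra.smul_def, L.A_pow_eq, Finset.smul_sum]
    apply Finset.sum_congr rfl
    intro j _
    rw [Polynomial.eval_monomial, smul_smul]

end LeonardSystem

namespace LeonardSystem

variable {K : Type*} [Field K] {d : ℕ} (L : LeonardSystem K d)

theorem Es_mulVec_idem (k : Fin (d+1)) (x : Fin (d+1) → K) :
    L.Estar k *ᵥ (L.Estar k *ᵥ x) = L.Estar k *ᵥ x := by
  rw [Matrix.mulVec_mulVec, L.Es_idem]

theorem Es_mulVec_orth {k l : Fin (d+1)} (h : k ≠ l) (x : Fin (d+1) → K) :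
    L.Estar k *ᵥ (L.Estar l *ᵥ x) = 0 := by
  rw [Matrix.mulVec_mulVec, L.Es_mul, if_neg h, Matrix.zero_mulVec]

theorem sum_Es_mulVec (x : Fin (d+1) → K) : ∑ k, L.Estar k *ᵥ x = x := by
  rw [← sum_mulVec', L.Es_sum, Matrix.one_mulVec]

/-- A fixed choice of a nonzero vector in each `E*_j V`. -/
theorem exists_ws : ∃ ws : Fin (d+1) → (Fin (d+1) → K),
    ∀ j, ws j ≠ 0 ∧ L.Estar j *ᵥ ws j = ws j := by
  choose v hv using fun j => exists_mulVec_ne (L.Es_ne j)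
  exact ⟨fun j => L.Estar j *ᵥ v j, fun j => ⟨hv j, L.Es_mulVec_idem j (v j)⟩⟩

/-- Each `E*_j V` is one dimensional: the image of `E*_j` lies in the span of any
nonzero `E*_j`-fixed vector. -/
theorem Es_proj_span (j : Fin (d+1)) (x : Fin (d+1) → K) (hx : x ≠ 0)
    (hfx : L.Estar j *ᵥ x = x) (t : Fin (d+1) → K) : ∃ c : K, L.Estar j *ᵥ t = c • x := by
  obtain ⟨ws, hws⟩ := L.exists_ws
  have key : ∀ (u : Fin (d+1) → K) (k : Fin (d+1)), ∃ c : K, L.Estar k *ᵥ u = c • ws k := by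
    have hli : LinearIndependent K ws := by
      rw [Fintype.linearIndependent_iff]
      intro g hg k
      have h0 : L.Estar k *ᵥ (∑ i, g i • ws i) = 0 := by rw [hg, Matrix.mulVec_zero]
      rw [mulVec_sum''] at h0
      have : ∀ i, L.Estar k *ᵥ (g i • ws i) = if k = i then g i • ws k else 0 := by
        intro i
        rw [Matrix.mulVec_smul]
        by_cases hki : k = i
        · subst hki; rw [if_pos rfl, (hws k).2]
        · rw [if_neg hki, ← (hws i).2, L.Es_mulVec_orth hki, smul_zero]
      rw [Finset.sum_congr rfl (fun i _ => this i), Finset.sum_ite_eq] at h0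
      simp only [Finset.mem_univ, if_pos] at h0
      rcases smul_eq_zero.mp h0 with h | h
      · exact h
      · exact absurd h (hws k).1
    have hcard : Fintype.card (Fin (d+1)) = Module.finrank K (Fin (d+1) → K) := by simp
    let b := basisOfLinearIndependentOfCardEqFinrank hli hcard
    have hb : ⇑b = ws := coe_basisOfLinearIndependentOfCardEqFinrank hli hcard
    intro u k
    have hrep : ∑ i, b.repr u i • ws i = u := by
      conv_rhs => rw [← b.sum_repr u]
      rw [hb]
    refine ⟨b.repr u k, ?_⟩
    conv_lhs => rw [← hrep]
    rw [mulVec_sum'']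
    have : ∀ i, L.Estar k *ᵥ (b.repr u i • ws i) = if k = i then b.repr u k • ws k else 0 := by
      intro i
      rw [Matrix.mulVec_smul]
      by_cases hki : k = i
      · subst hki; rw [if_pos rfl, (hws k).2]
      · rw [if_neg hki, ← (hws i).2, L.Es_mulVec_orth hki, smul_zero]
    rw [Finset.sum_congr rfl (fun i _ => this i), Finset.sum_ite_eq, if_pos (Finset.mem_univ k)]
  -- now express x in terms of ws j
  obtain ⟨a, ha⟩ := key x j
  have ha' : x = a • ws j := by rw [← hfx, ha]
  have hane : a ≠ 0 := by
    intro h0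
    rw [h0, zero_smul] at ha'
    exact hx ha'
  obtain ⟨c, hc⟩ := key t j
  exact ⟨c * a⁻¹, by rw [hc, ha', smul_smul, mul_assoc, inv_mul_cancel₀ hane, mul_one]⟩

theorem E_proj_span (j : Fin (d+1)) (x : Fin (d+1) → K) (hx : x ≠ 0)
    (hfx : L.E j *ᵥ x = x) (t : Fin (d+1) → K) : ∃ c : K, L.E j *ᵥ t = c • x :=
  L.dual.Es_proj_span j x hx hfx t

end LeonardSystem

namespace LeonardSystem

variable {K : Type*} [Field K] {d : ℕ} (L : LeonardSystem K d)

theorem natAbs_gt {a b : Fin (d+1)} (h : (a:ℕ)+2 ≤ (b:ℕ) ∨ (b:ℕ)+2 ≤ (a:ℕ)) :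
    ((a:ℤ) - (b:ℤ)).natAbs > 1 := by omega

theorem natAbs_one {a b : Fin (d+1)} (h : (a:ℕ)+1 = (b:ℕ) ∨ (b:ℕ)+1 = (a:ℕ)) :
    ((a:ℤ) - (b:ℤ)).natAbs = 1 := by omega

section vecs

variable (w : Fin (d+1) → K)

/-- `E*_j τ_i(A) ξ*_0 = 0` for `j > i`. -/
theorem Es_tauA_w_zero (hfix : L.Estar 0 *ᵥ w = w) :
    ∀ (i : ℕ) (j : Fin (d+1)), i < (j:ℕ) → L.Estar j *ᵥ (L.tauA i *ᵥ w) = 0 := by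
  intro i
  induction i with
  | zero =>
    intro j hj
    show L.Estar j *ᵥ ((1 : Matrix _ _ K) *ᵥ w) = 0
    rw [Matrix.one_mulVec, ← hfix, L.Es_mulVec_orth (by intro hc; rw [hc] at hj; simp at hj)]
  | succ i ih =>
    intro j hj
    have hsplit : L.tauA (i+1) *ᵥ w
        = L.A *ᵥ (L.tauA i *ᵥ w) - L.θN i • (L.tauA i *ᵥ w) := by
      rw [L.tauA_succ', ← Matrix.mulVec_mulVec, Matrix.sub_mulVec,
        Matrix.smul_mulVec, Matrix.one_mulVec]
    rw [hsplit, mulVec_sub'', Matrix.mulVec_smul, ih j (by omega), smul_zero, sub_zero]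
    -- expand the middle with ∑ E*_k
    conv_lhs => rw [← L.sum_Es_mulVec (L.tauA i *ᵥ w)]
    rw [mulVec_sum'', mulVec_sum'']
    apply Finset.sum_eq_zero
    intro k _
    rcases lt_trichotomy (k:ℕ) (i+1) with hk | hk | hk
    · -- k ≤ i : use strid0
      rw [← L.Es_mulVec_idem k, Matrix.mulVec_mulVec, Matrix.mulVec_mulVec,
        L.strid0 j k (natAbs_gt (Or.inr (by omega))), Matrix.zero_mulVec]
    · -- k = i+1 : E*_k (τ_i w) = 0
      rw [ih k (by omega), Matrix.mulVec_zero, Matrix.mulVec_zero]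
    · -- k > i+1
      rw [ih k (by omega), Matrix.mulVec_zero, Matrix.mulVec_zero]

/-- The chain `v_n = E*_n τ_n(A) ξ*_0` is nonzero. -/
theorem vchain (hw : w ≠ 0) (hfix : L.Estar 0 *ᵥ w = w) :
    ∀ (n : ℕ) (h : n ≤ d), (L.Estar ⟨n, by omega⟩) *ᵥ (L.tauA n *ᵥ w) ≠ 0 := by
  intro n
  induction n with
  | zero =>
    intro h
    show L.Estar 0 *ᵥ ((1 : Matrix _ _ K) *ᵥ w) ≠ 0
    rw [Matrix.one_mulVec, hfix]
    exact hw
  | succ n ih =>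
    intro h
    have hn : n ≤ d := by omega
    set jn : Fin (d+1) := ⟨n, by omega⟩ with hjn
    set jn1 : Fin (d+1) := ⟨n+1, by omega⟩ with hjn1
    have ihne := ih hn
    -- step 1 : E*_{n+1} u_{n+1} = E*_{n+1} A v_n
    have hstep : L.Estar jn1 *ᵥ (L.tauA (n+1) *ᵥ w)
        = L.Estar jn1 *ᵥ (L.A *ᵥ (L.Estar jn *ᵥ (L.tauA n *ᵥ w))) := by
      have hsplit : L.tauA (n+1) *ᵥ w
          = L.A *ᵥ (L.tauA n *ᵥ w) - L.θN n • (L.tauA n *ᵥ w) := by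
        rw [L.tauA_succ', ← Matrix.mulVec_mulVec, Matrix.sub_mulVec,
          Matrix.smul_mulVec, Matrix.one_mulVec]
      rw [hsplit, mulVec_sub'', Matrix.mulVec_smul,
        L.Es_tauA_w_zero w hfix n jn1 (by simp [hjn1]), smul_zero, sub_zero]
      conv_lhs => rw [← L.sum_Es_mulVec (L.tauA n *ᵥ w)]
      rw [mulVec_sum'', mulVec_sum'']
      rw [Finset.sum_eq_single jn]
      · intro k _ hk
        rcases lt_trichotomy (k:ℕ) n with hkn | hkn | hkn
        · rw [← L.Es_mulVec_idem k, Matrix.mulVec_mulVec, Matrix.mulVec_mulVec,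
            L.strid0 jn1 k (natAbs_gt (Or.inr (show (k:ℕ)+2 ≤ n+1 by omega))),
            Matrix.zero_mulVec]
        · exact absurd (Fin.ext hkn : k = jn) hk
        · rw [L.Es_tauA_w_zero w hfix n k (by omega), Matrix.mulVec_zero, Matrix.mulVec_zero]
      · intro hjn'; exact absurd (Finset.mem_univ jn) hjn'
    rw [hstep]
    -- step 2 : nonzero
    have hNz := L.strid1 jn1 jn (natAbs_one (Or.inr rfl))
    obtain ⟨z, hz⟩ := exists_mulVec_ne hNz
    have hvfix : L.Estar jn *ᵥ (L.Estar jn *ᵥ (L.tauA n *ᵥ w)) = L.Estar jn *ᵥ (L.tauA n *ᵥ w) :=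
      L.Es_mulVec_idem jn _
    obtain ⟨c, hc⟩ := L.Es_proj_span jn _ ihne hvfix z
    intro hcontra
    apply hz
    rw [Matrix.mul_assoc, ← Matrix.mulVec_mulVec, ← Matrix.mulVec_mulVec, hc,
      Matrix.mulVec_smul, Matrix.mulVec_smul, hcontra, smul_zero]

/-- `{τ_i(A) ξ*_0}` is linearly independent. -/
theorem u_indep (hw : w ≠ 0) (hfix : L.Estar 0 *ᵥ w = w) :
    LinearIndependent K (fun i : Fin (d+1) => L.tauA (i:ℕ) *ᵥ w) := by
  rw [Fintype.linearIndependent_iff]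
  intro g hg
  have key : ∀ m, ∀ k : Fin (d+1), d - (k:ℕ) = m → g k = 0 := by
    intro m
    induction m using Nat.strong_induction_on with
    | _ m ihm =>
      intro k hk
      have h0 : L.Estar k *ᵥ (∑ i, g i • (L.tauA (i:ℕ) *ᵥ w)) = 0 := by
        rw [hg, Matrix.mulVec_zero]
      rw [mulVec_sum''] at h0
      have hterm : ∀ i : Fin (d+1), L.Estar k *ᵥ (g i • (L.tauA (i:ℕ) *ᵥ w))
          = if i = k then g k • (L.Estar k *ᵥ (L.tauA (k:ℕ) *ᵥ w)) else 0 := by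
        intro i
        rw [Matrix.mulVec_smul]
        rcases lt_trichotomy (i:ℕ) (k:ℕ) with hik | hik | hik
        · rw [L.Es_tauA_w_zero w hfix (i:ℕ) k hik, smul_zero,
            if_neg (fun hc => by rw [hc] at hik; omega)]
        · have : i = k := Fin.ext hik
          subst this
          rw [if_pos rfl]
        · have hgi : g i = 0 := ihm (d - (i:ℕ)) (by omega) i rfl
          rw [hgi, zero_smul, if_neg (fun hc => by rw [hc] at hik; omega)]
      rw [Finset.sum_congr rfl (fun i _ => hterm i), Finset.sum_ite_eq',
        if_pos (Finset.mem_univ k)] at h0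
      rcases smul_eq_zero.mp h0 with h | h
      · exact h
      · exact absurd h (L.vchain w hw hfix (k:ℕ) (by omega))
  intro k
  exact key (d - (k:ℕ)) k rfl

/-- `E_h ξ*_0 ≠ 0` for every `h`. -/
theorem E_w_ne (hw : w ≠ 0) (hfix : L.Estar 0 *ᵥ w = w) (h : Fin (d+1)) :
    L.E h *ᵥ w ≠ 0 := by
  obtain ⟨z, hz⟩ := exists_mulVec_ne (L.E_ne h)
  have hli := L.u_indep w hw hfix
  have hcard : Fintype.card (Fin (d+1)) = Module.finrank K (Fin (d+1) → K) := by simp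
  let b := basisOfLinearIndependentOfCardEqFinrank hli hcard
  have hb : ⇑b = fun i : Fin (d+1) => L.tauA (i:ℕ) *ᵥ w :=
    coe_basisOfLinearIndependentOfCardEqFinrank hli hcard
  have hrep : ∑ i, b.repr z i • (L.tauA (i:ℕ) *ᵥ w) = z := by
    conv_rhs => rw [← b.sum_repr z]
    rw [hb]
  intro hc
  apply hz
  conv_lhs => rw [← hrep]
  rw [mulVec_sum'']
  apply Finset.sum_eq_zero
  intro i _
  rw [Matrix.mulVec_smul, Matrix.mulVec_mulVec, L.E_mul_tauA, Matrix.smul_mulVec,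
    hc, smul_zero, smul_zero]

end vecs

end LeonardSystem

namespace LeonardSystem

variable {K : Type*} [Field K] {d : ℕ} (L : LeonardSystem K d)

theorem E_mulVec_idem (k : Fin (d+1)) (x : Fin (d+1) → K) :
    L.E k *ᵥ (L.E k *ᵥ x) = L.E k *ᵥ x := L.dual.Es_mulVec_idem k x

theorem E_mulVec_orth {k l : Fin (d+1)} (h : k ≠ l) (x : Fin (d+1) → K) :
    L.E k *ᵥ (L.E l *ᵥ x) = 0 := L.dual.Es_mulVec_orth h x

theorem sum_E_mulVec (x : Fin (d+1) → K) : ∑ k, L.E k *ᵥ x = x := L.dual.sum_Es_mulVec x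

section split

variable (w : Fin (d+1) → K)

theorem E_tauA_w_vanish (k : Fin (d+1)) {n : ℕ} (hkn : (k:ℕ) < n) :
    L.E k *ᵥ (L.tauA n *ᵥ w) = 0 := by
  rw [Matrix.mulVec_mulVec, L.E_mul_tauA, Matrix.smul_mulVec, L.tauS_eq_zero hkn,
    zero_smul]

theorem E_tauA_w_eq (k : Fin (d+1)) (n : ℕ) :
    L.E k *ᵥ (L.tauA n *ᵥ w) = L.tauS n (L.θ k) • (L.E k *ᵥ w) := by
  rw [Matrix.mulVec_mulVec, L.E_mul_tauA, Matrix.smul_mulVec]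

theorem split_exists (hw : w ≠ 0) (hfix : L.Estar 0 *ᵥ w = w) {j : ℕ}
    (hj1 : 1 ≤ j) (hjd : j ≤ d) :
    ∃ c : K, (L.Astar - L.θsN j • 1) *ᵥ (L.tauA j *ᵥ w) = c • (L.tauA (j-1) *ᵥ w) := by
  set xx := (L.Astar - L.θsN j • 1) *ᵥ (L.tauA j *ᵥ w) with hxxdef
  have hxeq : xx = L.Astar *ᵥ (L.tauA j *ᵥ w) - L.θsN j • (L.tauA j *ᵥ w) := by
    rw [hxxdef, Matrix.sub_mulVec, Matrix.smul_mulVec, Matrix.one_mulVec]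
  -- s1 : high E*-components vanish
  have s1 : ∀ k : Fin (d+1), j ≤ (k:ℕ) → L.Estar k *ᵥ xx = 0 := by
    intro k hk
    have hAs : L.Estar k *ᵥ (L.Astar *ᵥ (L.tauA j *ᵥ w))
        = L.θs k • (L.Estar k *ᵥ (L.tauA j *ᵥ w)) := by
      rw [Matrix.mulVec_mulVec, L.Es_mul_As, Matrix.smul_mulVec, Matrix.mulVec_mulVec]
    rw [hxeq, mulVec_sub'', hAs, Matrix.mulVec_smul]
    rcases eq_or_lt_of_le hk with hk' | hk'
    · have hθ : L.θsN j = L.θs k := by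
        rw [L.θsN_eq hjd]; congr 1; exact Fin.ext hk'
      rw [hθ, ← sub_smul, sub_self, zero_smul]
    · rw [L.Es_tauA_w_zero w hfix j k hk', smul_zero, smul_zero, sub_zero]
  -- s2 : low E-components vanish
  have s2 : ∀ h : Fin (d+1), (h:ℕ) + 2 ≤ j → L.E h *ᵥ xx = 0 := by
    intro h hh
    rw [hxeq, mulVec_sub'', Matrix.mulVec_smul, L.E_tauA_w_vanish w h (by omega), smul_zero,
      sub_zero]
    conv_lhs => rw [← L.sum_E_mulVec (L.tauA j *ᵥ w)]
    rw [mulVec_sum'', mulVec_sum'']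
    apply Finset.sum_eq_zero
    intro k _
    rcases lt_or_ge (k:ℕ) j with hk | hk
    · rw [L.E_tauA_w_vanish w k hk, Matrix.mulVec_zero, Matrix.mulVec_zero]
    · rw [← L.E_mulVec_idem k, Matrix.mulVec_mulVec, Matrix.mulVec_mulVec,
        L.trid0 h k (natAbs_gt (Or.inl (by omega))), Matrix.zero_mulVec]
  -- the coefficient
  have hvj1 := L.vchain w hw hfix (j-1) (by omega)
  obtain ⟨c, hc⟩ := L.Es_proj_span ⟨j-1, by omega⟩ _ hvj1 (L.Es_mulVec_idem _ _) xx
  refine ⟨c, ?_⟩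
  set y := xx - c • (L.tauA (j-1) *ᵥ w) with hydef
  suffices hy0 : y = 0 by
    rw [hydef] at hy0
    exact sub_eq_zero.mp hy0
  -- E*-equations for y
  have hEsy : ∀ k : Fin (d+1), j - 1 ≤ (k:ℕ) → L.Estar k *ᵥ y = 0 := by
    intro k hk
    rw [hydef, mulVec_sub'', Matrix.mulVec_smul]
    rcases eq_or_lt_of_le hk with hk' | hk'
    · have hkfin : k = ⟨j-1, by omega⟩ := Fin.ext hk'.symm
      rw [hkfin, hc, sub_self]
    · rw [s1 k (by omega), L.Es_tauA_w_zero w hfix (j-1) k hk', smul_zero, sub_zero]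
  -- E-equations for y
  have hEy : ∀ h : Fin (d+1), (h:ℕ) + 2 ≤ j → L.E h *ᵥ y = 0 := by
    intro h hh
    rw [hydef, mulVec_sub'', Matrix.mulVec_smul, s2 h hh,
      L.E_tauA_w_vanish w h (by omega), smul_zero, sub_self]
  -- expand y in the basis
  have hli := L.u_indep w hw hfix
  have hcard : Fintype.card (Fin (d+1)) = Module.finrank K (Fin (d+1) → K) := by simp
  let b := basisOfLinearIndependentOfCardEqFinrank hli hcard
  have hb : ⇑b = fun i : Fin (d+1) => L.tauA (i:ℕ) *ᵥ w :=
    coe_basisOfLinearIndependentOfCardEqFinrank hli hcard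
  set g : Fin (d+1) → K := fun i => b.repr y i with hgdef
  have hrep : ∑ i, g i • (L.tauA (i:ℕ) *ᵥ w) = y := by
    conv_rhs => rw [← b.sum_repr y]
    rw [hb]
  have hESsum : ∀ k : Fin (d+1), L.Estar k *ᵥ y
      = ∑ i, g i • (L.Estar k *ᵥ (L.tauA (i:ℕ) *ᵥ w)) := by
    intro k
    conv_lhs => rw [← hrep]
    rw [mulVec_sum'']
    exact Finset.sum_congr rfl fun i _ => Matrix.mulVec_smul _ _ _
  have hEsum : ∀ h : Fin (d+1), L.E h *ᵥ y
      = ∑ i, g i • (L.E h *ᵥ (L.tauA (i:ℕ) *ᵥ w)) := by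
    intro h
    conv_lhs => rw [← hrep]
    rw [mulVec_sum'']
    exact Finset.sum_congr rfl fun i _ => Matrix.mulVec_smul _ _ _
  -- kill high coefficients, downward
  have hdown : ∀ m, ∀ k : Fin (d+1), j - 1 ≤ (k:ℕ) → d - (k:ℕ) = m → g k = 0 := by
    intro m
    induction m using Nat.strong_induction_on with
    | _ m ihm =>
      intro k hjk hk
      have h0 := (hESsum k).symm.trans (hEsy k hjk)
      have hterm : ∀ i : Fin (d+1), g i • (L.Estar k *ᵥ (L.tauA (i:ℕ) *ᵥ w))
          = if i = k then g k • (L.Estar k *ᵥ (L.tauA (k:ℕ) *ᵥ w)) else 0 := by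
        intro i
        rcases lt_trichotomy (i:ℕ) (k:ℕ) with hik | hik | hik
        · rw [L.Es_tauA_w_zero w hfix (i:ℕ) k hik, smul_zero,
            if_neg (fun hcon => by rw [hcon] at hik; omega)]
        · have : i = k := Fin.ext hik
          subst this
          rw [if_pos rfl]
        · have hgi : g i = 0 := ihm (d - (i:ℕ)) (by omega) i (by omega) rfl
          rw [hgi, zero_smul, if_neg (fun hcon => by rw [hcon] at hik; omega)]
      rw [Finset.sum_congr rfl (fun i _ => hterm i), Finset.sum_ite_eq',
        if_pos (Finset.mem_univ k)] at h0
      rcases smul_eq_zero.mp h0 with hg0 | hg0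
      · exact hg0
      · exact absurd hg0 (L.vchain w hw hfix (k:ℕ) (by omega))
  -- kill low coefficients, upward
  have hup : ∀ n, ∀ h : Fin (d+1), (h:ℕ) = n → (h:ℕ) + 2 ≤ j → g h = 0 := by
    intro n
    induction n using Nat.strong_induction_on with
    | _ n ihn =>
      intro h hn hhj
      have h0 := (hEsum h).symm.trans (hEy h hhj)
      have hterm : ∀ i : Fin (d+1), g i • (L.E h *ᵥ (L.tauA (i:ℕ) *ᵥ w))
          = if i = h then (g h * L.tauS (h:ℕ) (L.θ h)) • (L.E h *ᵥ w) else 0 := by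
        intro i
        rcases lt_trichotomy (i:ℕ) (h:ℕ) with hih | hih | hih
        · have hgi : g i = 0 := ihn (i:ℕ) (by omega) i rfl (by omega)
          rw [hgi, zero_smul, if_neg (fun hcon => by rw [hcon] at hih; omega)]
        · have : i = h := Fin.ext hih
          subst this
          rw [if_pos rfl, L.E_tauA_w_eq, smul_smul]
        · rw [L.E_tauA_w_vanish w h hih, smul_zero,
            if_neg (fun hcon => by rw [hcon] at hih; omega)]
      rw [Finset.sum_congr rfl (fun i _ => hterm i), Finset.sum_ite_eq',
        if_pos (Finset.mem_univ h)] at h0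
      rcases smul_eq_zero.mp h0 with hg0 | hg0
      · rcases mul_eq_zero.mp hg0 with hg1 | hg1
        · exact hg1
        · exact absurd hg1 (L.tauS_ne_zero (le_refl _))
      · exact absurd hg0 (L.E_w_ne w hw hfix h)
  have hgall : ∀ k : Fin (d+1), g k = 0 := by
    intro k
    rcases le_or_gt (j-1) (k:ℕ) with hk | hk
    · exact hdown (d - (k:ℕ)) k hk rfl
    · exact hup (k:ℕ) k rfl (by omega)
  rw [← hrep]
  apply Finset.sum_eq_zero
  intro i _
  rw [hgall i, zero_smul]

end split

end LeonardSystem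

namespace LeonardSystem

variable {K : Type*} [Field K] {d : ℕ} (L : LeonardSystem K d)

theorem aeval_Astar (p : K[X]) :
    Polynomial.aeval L.Astar p = ∑ j, p.eval (L.θs j) • L.Estar j := by
  have := L.dual.aeval_A p
  simpa using this

theorem Estar_eq_aeval (m : Fin (d+1)) : ∃ p : K[X],
    Polynomial.aeval L.Astar p = L.Estar m := by
  have hinj : Set.InjOn L.θs (Finset.univ : Finset (Fin (d+1))) :=
    fun a _ b _ h => L.θs_inj h
  refine ⟨Lagrange.interpolate Finset.univ L.θs (fun i => if i = m then (1:K) else 0), ?_⟩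
  rw [L.aeval_Astar]
  rw [Finset.sum_congr rfl (fun i _ => by
    rw [Lagrange.eval_interpolate_at_node _ hinj (Finset.mem_univ i)])]
  simp only [ite_smul, one_smul, zero_smul]
  rw [Finset.sum_ite_eq', if_pos (Finset.mem_univ m)]

section phihat

variable (w : Fin (d+1) → K)

theorem exists_phihat (hw : w ≠ 0) (hfix : L.Estar 0 *ᵥ w = w) : ∃ f : ℕ → K,
    ∀ j, 1 ≤ j → j ≤ d →
      (L.Astar - L.θsN j • 1) *ᵥ (L.tauA j *ᵥ w) = f j • (L.tauA (j-1) *ᵥ w) := by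
  have h := fun j (h1 : 1 ≤ j) (h2 : j ≤ d) => L.split_exists w hw hfix h1 h2
  choose! f hf using h
  exact ⟨f, hf⟩

theorem As_w (hfix : L.Estar 0 *ᵥ w = w) : L.Astar *ᵥ w = L.θsN 0 • w := by
  conv_lhs => rw [← hfix]
  rw [Matrix.mulVec_mulVec, L.As_mul_Es, Matrix.smul_mulVec, hfix, L.θsN_eq (by omega)]
  congr 1

theorem As_u (f : ℕ → K)
    (hf : ∀ j, 1 ≤ j → j ≤ d →
      (L.Astar - L.θsN j • 1) *ᵥ (L.tauA j *ᵥ w) = f j • (L.tauA (j-1) *ᵥ w))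
    {n : ℕ} (h1 : 1 ≤ n) (h2 : n ≤ d) :
    L.Astar *ᵥ (L.tauA n *ᵥ w)
      = L.θsN n • (L.tauA n *ᵥ w) + f n • (L.tauA (n-1) *ᵥ w) := by
  have h := hf n h1 h2
  rw [Matrix.sub_mulVec, Matrix.smul_mulVec, Matrix.one_mulVec, sub_eq_iff_eq_add] at h
  rw [h]
  exact add_comm _ _

theorem A_u (n : ℕ) : L.A *ᵥ (L.tauA n *ᵥ w)
    = (L.tauA (n+1) *ᵥ w) + L.θN n • (L.tauA n *ᵥ w) := by
  have h : L.tauA (n+1) *ᵥ w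
      = L.A *ᵥ (L.tauA n *ᵥ w) - L.θN n • (L.tauA n *ᵥ w) := by
    rw [L.tauA_succ', ← Matrix.mulVec_mulVec, Matrix.sub_mulVec,
      Matrix.smul_mulVec, Matrix.one_mulVec]
  rw [h]
  abel

set_option maxHeartbeats 1000000 in
theorem phihat_ne (hw : w ≠ 0) (hfix : L.Estar 0 *ᵥ w = w) (f : ℕ → K)
    (hf : ∀ j, 1 ≤ j → j ≤ d →
      (L.Astar - L.θsN j • 1) *ᵥ (L.tauA j *ᵥ w) = f j • (L.tauA (j-1) *ᵥ w)) :
    ∀ j, 1 ≤ j → j ≤ d → f j ≠ 0 := by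
  intro j hj1 hjd hfj0
  set uF : Fin (d+1) → (Fin (d+1) → K) := fun i => L.tauA (i:ℕ) *ᵥ w with huF
  set S : Set (Fin (d+1)) := {k | j ≤ (k:ℕ)} with hS
  set W := Submodule.span K (uF '' S) with hWdef
  have hWA : ∀ x ∈ W, L.A *ᵥ x ∈ W := by
    intro x hx
    induction hx using Submodule.span_induction with
    | mem y hy =>
      obtain ⟨k, hk, rfl⟩ := hy
      have hk' : j ≤ (k:ℕ) := hk
      rw [huF, L.A_u w]
      apply W.add_mem
      · rcases lt_or_ge (k:ℕ) d with hkd | hkd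
        · have hmem : (⟨(k:ℕ)+1, by omega⟩ : Fin (d+1)) ∈ S := by
            simp only [hS, Set.mem_setOf_eq]
            omega
          have heq : L.tauA ((k:ℕ)+1) *ᵥ w = uF ⟨(k:ℕ)+1, by omega⟩ := rfl
          rw [heq]
          exact Submodule.subset_span ⟨_, hmem, rfl⟩
        · have hkd' : (k:ℕ) = d := by omega
          rw [hkd', L.tauA_zero_of_gt (le_refl _), Matrix.zero_mulVec]
          exact W.zero_mem
      · exact W.smul_mem _ (Submodule.subset_span ⟨k, hk, rfl⟩)
    | zero => rw [Matrix.mulVec_zero]; exact W.zero_mem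
    | add y z hy hz ihy ihz =>
      rw [Matrix.mulVec_add]
      exact W.add_mem ihy ihz
    | smul a y hy ihy =>
      rw [Matrix.mulVec_smul]
      exact W.smul_mem _ ihy
  have hWAs : ∀ x ∈ W, L.Astar *ᵥ x ∈ W := by
    intro x hx
    induction hx using Submodule.span_induction with
    | mem y hy =>
      obtain ⟨k, hk, rfl⟩ := hy
      have hk' : j ≤ (k:ℕ) := hk
      have hk1 : 1 ≤ (k:ℕ) := le_trans hj1 hk'
      rw [huF, L.As_u w f hf hk1 (by omega)]
      apply W.add_mem
      · exact W.smul_mem _ (Submodule.subset_span ⟨k, hk, rfl⟩)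
      · rcases eq_or_lt_of_le hk' with hkk | hkk
        · rw [← hkk, hfj0, zero_smul]
          exact W.zero_mem
        · have hmem : (⟨(k:ℕ)-1, by omega⟩ : Fin (d+1)) ∈ S := by
            simp only [hS, Set.mem_setOf_eq]
            omega
          have heq : L.tauA ((k:ℕ)-1) *ᵥ w = uF ⟨(k:ℕ)-1, by omega⟩ := rfl
          rw [heq]
          exact W.smul_mem _ (Submodule.subset_span ⟨_, hmem, rfl⟩)
    | zero => rw [Matrix.mulVec_zero]; exact W.zero_mem
    | add y z hy hz ihy ihz =>
      rw [Matrix.mulVec_add]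
      exact W.add_mem ihy ihz
    | smul a y hy ihy =>
      rw [Matrix.mulVec_smul]
      exact W.smul_mem _ ihy
  have hWAsPow : ∀ (n : ℕ) (x), x ∈ W → (L.Astar ^ n) *ᵥ x ∈ W := by
    intro n
    induction n with
    | zero => intro x hx; rw [pow_zero, Matrix.one_mulVec]; exact hx
    | succ n ih =>
      intro x hx
      rw [pow_succ, ← Matrix.mulVec_mulVec]
      exact ih _ (hWAs x hx)
  have hWpoly : ∀ (p : K[X]) (x), x ∈ W → (Polynomial.aeval L.Astar p) *ᵥ x ∈ W := by
    intro p
    induction p using Polynomial.induction_on' with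
    | add p q hp hq =>
      intro x hx
      rw [map_add, Matrix.add_mulVec]
      exact W.add_mem (hp x hx) (hq x hx)
    | monomial n a =>
      intro x hx
      rw [Polynomial.aeval_monomial, ← Algebra.smul_def, Matrix.smul_mulVec]
      exact W.smul_mem _ (hWAsPow n x hx)
  have hWEs : ∀ (m : Fin (d+1)) (x), x ∈ W → L.Estar m *ᵥ x ∈ W := by
    intro m x hx
    obtain ⟨p, hp⟩ := L.Estar_eq_aeval m
    rw [← hp]
    exact hWpoly p x hx
  -- descending chain
  have hchain : ∀ m, m ≤ j → ∃ z : Fin (d+1) → K,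
      z ≠ 0 ∧ z ∈ W ∧ L.Estar ⟨j-m, by omega⟩ *ᵥ z = z := by
    intro m
    induction m with
    | zero =>
      intro _
      refine ⟨L.Estar ⟨j, by omega⟩ *ᵥ (L.tauA j *ᵥ w), L.vchain w hw hfix j hjd, ?_, ?_⟩
      · apply hWEs
        exact Submodule.subset_span ⟨⟨j, by omega⟩, le_refl j, rfl⟩
      · exact L.Es_mulVec_idem _ _
    | succ m ihm =>
      intro hmj
      obtain ⟨z, hz0, hzW, hzfix⟩ := ihm (by omega)
      have hgen : ∀ (k1 k0 : Fin (d+1)), (k1:ℕ)+1 = (k0:ℕ) →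
          L.Estar k0 *ᵥ z = z → L.Estar k1 *ᵥ (L.A *ᵥ z) ≠ 0 := by
        intro k1 k0 hk10 hzf
        have hNz := L.strid1 k1 k0 (natAbs_one (Or.inl hk10))
        obtain ⟨t, ht⟩ := exists_mulVec_ne hNz
        obtain ⟨c, hcz⟩ := L.Es_proj_span k0 z hz0 hzf t
        intro hcon
        apply ht
        rw [Matrix.mul_assoc, ← Matrix.mulVec_mulVec, ← Matrix.mulVec_mulVec, hcz,
          Matrix.mulVec_smul, Matrix.mulVec_smul, hcon, smul_zero]
      refine ⟨L.Estar ⟨j-(m+1), by omega⟩ *ᵥ (L.A *ᵥ z), ?_, ?_, ?_⟩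
      · exact hgen ⟨j-(m+1), by omega⟩ ⟨j-m, by omega⟩ (by
          show (j-(m+1))+1 = j-m
          omega) hzfix
      · exact hWEs _ _ (hWA _ hzW)
      · exact L.Es_mulVec_idem _ _
  obtain ⟨z, hz0, hzW, hzfix⟩ := hchain j (le_refl j)
  have hzero : (⟨j-j, by omega⟩ : Fin (d+1)) = 0 := Fin.ext (by simp)
  rw [hzero] at hzfix
  obtain ⟨c, hcw⟩ := L.Es_proj_span 0 z hz0 hzfix w
  have hwW : w ∈ W := by
    rw [← hfix, hcw]
    exact W.smul_mem c hzW
  have hli := L.u_indep w hw hfix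
  have hnot : uF 0 ∉ W := hli.notMem_span_image (by
    simp only [hS, Set.mem_setOf_eq, not_le]
    have h0 : ((0 : Fin (d+1)) : ℕ) = 0 := rfl
    omega)
  apply hnot
  have : uF 0 = w := by
    show L.tauA ((0 : Fin (d+1)) : ℕ) *ᵥ w = w
    show L.tauA 0 *ᵥ w = w
    show (1 : Matrix _ _ K) *ᵥ w = w
    rw [Matrix.one_mulVec]
  rw [this]
  exact hwW

end phihat

end LeonardSystem

namespace LeonardSystem

variable {K : Type*} [Field K] {d : ℕ} (L : LeonardSystem K d)

section collapse

variable (w : Fin (d+1) → K)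

/-- Lowering: `τ*_m(A*) τ_j(A) ξ*_0 = (φ_{j-m+1}⋯φ_j) τ_{j-m}(A) ξ*_0 + (higher terms)`. -/
theorem tausA_u (f : ℕ → K)
    (hf : ∀ j, 1 ≤ j → j ≤ d →
      (L.Astar - L.θsN j • 1) *ᵥ (L.tauA j *ᵥ w) = f j • (L.tauA (j-1) *ᵥ w)) :
    ∀ m j, m ≤ j → j ≤ d → ∃ z ∈ Submodule.span K
        ((fun k : Fin (d+1) => L.tauA (k:ℕ) *ᵥ w) '' {k : Fin (d+1) | j - m < (k:ℕ)}),
      L.tausA m *ᵥ (L.tauA j *ᵥ w)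
        = (∏ k ∈ Finset.Ioc (j-m) j, f k) • (L.tauA (j-m) *ᵥ w) + z := by
  intro m
  induction m with
  | zero =>
    intro j hmj hjd
    refine ⟨0, Submodule.zero_mem _, ?_⟩
    show (1 : Matrix _ _ K) *ᵥ _ = _
    rw [Matrix.one_mulVec, Nat.sub_zero, Finset.Ioc_self, Finset.prod_empty, one_smul, add_zero]
  | succ m ihm =>
    intro j hmj hjd
    have hj1 : 1 ≤ j := by omega
    -- first factor application
    have hfact : L.tausA (m+1) *ᵥ (L.tauA j *ᵥ w)
        = f j • (L.tausA m *ᵥ (L.tauA (j-1) *ᵥ w))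
          + (L.θsN j - L.θsN m) • (L.tausA m *ᵥ (L.tauA j *ᵥ w)) := by
      show (L.tausA m * (L.Astar - L.θsN m • 1)) *ᵥ _ = _
      rw [← Matrix.mulVec_mulVec]
      have hmid : (L.Astar - L.θsN m • 1) *ᵥ (L.tauA j *ᵥ w)
          = f j • (L.tauA (j-1) *ᵥ w) + (L.θsN j - L.θsN m) • (L.tauA j *ᵥ w) := by
        rw [Matrix.sub_mulVec, Matrix.smul_mulVec, Matrix.one_mulVec,
          L.As_u w f hf hj1 hjd, sub_smul]
        abel
      rw [hmid, Matrix.mulVec_add, Matrix.mulVec_smul, Matrix.mulVec_smul]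
    obtain ⟨z1, hz1, he1⟩ := ihm (j-1) (by omega) (by omega)
    obtain ⟨z2, hz2, he2⟩ := ihm j (by omega) hjd
    have hidx1 : (j-1) - m = j - (m+1) := by omega
    rw [hidx1] at hz1 he1
    -- assemble
    refine ⟨f j • z1 + (L.θsN j - L.θsN m) • ((∏ k ∈ Finset.Ioc (j-m) j, f k)
        • (L.tauA (j-m) *ᵥ w) + z2), ?_, ?_⟩
    · apply Submodule.add_mem
      · exact Submodule.smul_mem _ _ hz1
      · apply Submodule.smul_mem
        apply Submodule.add_mem
        · apply Submodule.smul_mem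
          apply Submodule.subset_span
          exact ⟨⟨j-m, by omega⟩, by simp only [Set.mem_setOf_eq]; omega, rfl⟩
        · refine Submodule.span_mono (Set.image_mono ?_) hz2
          intro k hk
          simp only [Set.mem_setOf_eq] at hk ⊢
          omega
    · rw [hfact, he1, he2]
      have hprod : f j * ∏ k ∈ Finset.Ioc (j-(m+1)) (j-1), f k
          = ∏ k ∈ Finset.Ioc (j-(m+1)) j, f k := by
        have hj' : j = (j-1)+1 := by omega
        rw [hj', Finset.prod_Ioc_succ_top (by omega), ← hj']
        ring
      rw [smul_add, smul_smul, hprod]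
      abel
  -- done

/-- The heart of the theorem: `E_0 τ*_r(A*) τ_i(A) ξ*_0 = δ_{ri} φ_1⋯φ_r E_0 ξ*_0`. -/
theorem collapse (hw : w ≠ 0) (hfix : L.Estar 0 *ᵥ w = w) (f : ℕ → K)
    (hf : ∀ j, 1 ≤ j → j ≤ d →
      (L.Astar - L.θsN j • 1) *ᵥ (L.tauA j *ᵥ w) = f j • (L.tauA (j-1) *ᵥ w))
    {r i : ℕ} (hr : r ≤ d) (hi : i ≤ d) :
    L.E 0 *ᵥ (L.tausA r *ᵥ (L.tauA i *ᵥ w))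
      = if r = i then (∏ k ∈ Finset.Ioc 0 r, f k) • (L.E 0 *ᵥ w) else 0 := by
  rcases lt_or_ge i r with hri | hri
  · -- r > i : already τ*_r(A*) τ_i(A) ξ*_0 = 0
    have hzero : L.tausA r *ᵥ (L.tauA i *ᵥ w) = 0 := by
      conv_lhs => rw [← L.sum_Es_mulVec (L.tauA i *ᵥ w)]
      rw [mulVec_sum'']
      apply Finset.sum_eq_zero
      intro k _
      rcases lt_or_ge (k:ℕ) r with hkr | hkr
      · rw [Matrix.mulVec_mulVec, L.tausA_mul_Es, Matrix.smul_mulVec,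
          L.tausS_eq_zero hkr, zero_smul]
      · rw [L.Es_tauA_w_zero w hfix i k (by omega), Matrix.mulVec_zero]
    rw [hzero, Matrix.mulVec_zero, if_neg (by omega)]
  · -- r ≤ i
    obtain ⟨z, hz, he⟩ := L.tausA_u w f hf r i hri hi
    have hEz : L.E 0 *ᵥ z = 0 := by
      have hker : Submodule.span K
          ((fun k : Fin (d+1) => L.tauA (k:ℕ) *ᵥ w) '' {k : Fin (d+1) | i - r < (k:ℕ)})
          ≤ LinearMap.ker (L.E 0).mulVecLin := by
        rw [Submodule.span_le]
        rintro x ⟨k, hk, rfl⟩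
        simp only [Set.mem_setOf_eq] at hk
        simp only [SetLike.mem_coe, LinearMap.mem_ker, Matrix.mulVecLin_apply]
        exact L.E_tauA_w_vanish w 0 (by
          have h0 : ((0 : Fin (d+1)) : ℕ) = 0 := rfl
          omega)
      have := hker hz
      simpa only [LinearMap.mem_ker, Matrix.mulVecLin_apply] using this
    rw [he, Matrix.mulVec_add, Matrix.mulVec_smul, hEz, add_zero]
    rcases eq_or_lt_of_le hri with hri' | hri'
    · subst hri'
      rw [if_pos rfl, Nat.sub_self]
      show _ • (L.E 0 *ᵥ ((1 : Matrix _ _ K) *ᵥ w)) = _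
      rw [Matrix.one_mulVec]
    · rw [L.E_tauA_w_vanish w 0 (by
        have h0 : ((0 : Fin (d+1)) : ℕ) = 0 := rfl
        omega), smul_zero, if_neg (by omega)]

end collapse

end LeonardSystem

namespace LeonardSystem

variable {K : Type*} [Field K] {d : ℕ} (L : LeonardSystem K d)

theorem aeval_XC (c : K) : Polynomial.aeval L.Astar (X - C c) = L.Astar - c • 1 := by
  rw [map_sub, Polynomial.aeval_X, Polynomial.aeval_C, Algebra.algebraMap_eq_smul_one]

theorem θsN0 : L.θsN 0 = L.θs 0 := by
  rw [L.θsN_eq (by omega)]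
  congr 1

section trace

variable (w : Fin (d+1) → K)

/-- Applying `∏_{s=1}^{i} (A* - θ*_s)` to `τ_i(A) ξ*_0` lowers it all the way to `ξ*_0`. -/
theorem lower_all (f : ℕ → K)
    (hf : ∀ j, 1 ≤ j → j ≤ d →
      (L.Astar - L.θsN j • 1) *ᵥ (L.tauA j *ᵥ w) = f j • (L.tauA (j-1) *ᵥ w)) :
    ∀ i, i ≤ d → (Polynomial.aeval L.Astar (∏ s ∈ Finset.Ioc 0 i, (X - C (L.θsN s))))
        *ᵥ (L.tauA i *ᵥ w) = (∏ k ∈ Finset.Ioc 0 i, f k) • w := by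
  intro i
  induction i with
  | zero =>
    intro _
    rw [Finset.Ioc_self, Finset.prod_empty, Finset.prod_empty, _root_.map_one, Matrix.one_mulVec,
      one_smul]
    show (1 : Matrix _ _ K) *ᵥ w = w
    rw [Matrix.one_mulVec]
  | succ i ih =>
    intro hid
    rw [Finset.prod_Ioc_succ_top (by omega), _root_.map_mul, ← Matrix.mulVec_mulVec, L.aeval_XC,
      hf (i+1) (by omega) hid]
    have hii : (i+1) - 1 = i := rfl
    rw [hii, Matrix.mulVec_smul, ih (by omega), Finset.prod_Ioc_succ_top (by omega),
      smul_smul, mul_comm (f (i+1)), ← smul_smul]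

/-- A polynomial in `A*` acting on `ξ*_0`. -/
theorem poly_w (hfix : L.Estar 0 *ᵥ w = w) (p : K[X]) :
    (Polynomial.aeval L.Astar p) *ᵥ w = p.eval (L.θsN 0) • w := by
  rw [L.aeval_Astar, sum_mulVec', Finset.sum_eq_single 0]
  · rw [Matrix.smul_mulVec, hfix, L.θsN0]
  · intro b _ hb
    rw [Matrix.smul_mulVec, ← hfix, L.Es_mulVec_orth hb, smul_zero]
  · intro hmem; exact absurd (Finset.mem_univ 0) hmem

/-- Lagrange: `∏_{s=1}^{d} (A* - θ*_s) = (∏_{s=1}^{d} (θ*_0 - θ*_s)) E*_0`. -/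
theorem lagrange_Es0 :
    Polynomial.aeval L.Astar (∏ s ∈ Finset.Ioc 0 d, (X - C (L.θsN s)))
      = (∏ s ∈ Finset.Ioc 0 d, (L.θsN 0 - L.θsN s)) • L.Estar 0 := by
  rw [L.aeval_Astar, Finset.sum_eq_single 0]
  · congr 1
    · rw [Polynomial.eval_prod]
      apply Finset.prod_congr rfl
      intro s _
      rw [Polynomial.eval_sub, Polynomial.eval_X, Polynomial.eval_C, L.θsN0]
  · intro b _ hb
    have hbv : 1 ≤ (b:ℕ) := by
      rcases Nat.eq_zero_or_pos (b:ℕ) with h0 | h1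
      · exact absurd (Fin.ext h0 : b = 0) hb
      · omega
    have : Polynomial.eval (L.θs b) (∏ s ∈ Finset.Ioc 0 d, (X - C (L.θsN s))) = 0 := by
      rw [Polynomial.eval_prod]
      apply Finset.prod_eq_zero (Finset.mem_Ioc.mpr ⟨hbv, by omega⟩)
      rw [Polynomial.eval_sub, Polynomial.eval_X, Polynomial.eval_C, L.θsN_eq (by omega)]
      simp
    rw [this, zero_smul]
  · intro hmem; exact absurd (Finset.mem_univ 0) hmem

theorem Δprod_ne (a b : ℕ) (hb : b ≤ d) :
    ∏ s ∈ Finset.Ioc a b, (L.θsN 0 - L.θsN s) ≠ 0 := by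
  apply Finset.prod_ne_zero_iff.mpr
  intro s hs
  have hs' := Finset.mem_Ioc.mp hs
  rw [L.θsN0]
  exact L.θs_sub_ne (by omega) (by
    have h0 : ((0 : Fin (d+1)) : ℕ) = 0 := rfl
    omega)

/-- `E*_0`-component of `τ_i(A) ξ*_0`. -/
theorem Es0_u (hw : w ≠ 0) (hfix : L.Estar 0 *ᵥ w = w) (f : ℕ → K)
    (hf : ∀ j, 1 ≤ j → j ≤ d →
      (L.Astar - L.θsN j • 1) *ᵥ (L.tauA j *ᵥ w) = f j • (L.tauA (j-1) *ᵥ w))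
    {i : ℕ} (hi : i ≤ d) :
    L.Estar 0 *ᵥ (L.tauA i *ᵥ w)
      = ((∏ k ∈ Finset.Ioc 0 i, f k) / (∏ s ∈ Finset.Ioc 0 i, (L.θsN 0 - L.θsN s))) • w := by
  have hDne := L.Δprod_ne 0 d (le_refl d)
  have hsplitD : (∏ s ∈ Finset.Ioc 0 d, (L.θsN 0 - L.θsN s))
      = (∏ s ∈ Finset.Ioc 0 i, (L.θsN 0 - L.θsN s))
        * ∏ s ∈ Finset.Ioc i d, (L.θsN 0 - L.θsN s) :=
    (Finset.prod_Ioc_consecutive _ (by omega) hi).symm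
  have hsplitP : (∏ s ∈ Finset.Ioc 0 d, (X - C (L.θsN s)))
      = (∏ s ∈ Finset.Ioc i d, (X - C (L.θsN s)))
        * ∏ s ∈ Finset.Ioc 0 i, (X - C (L.θsN s)) := by
    rw [mul_comm]
    exact (Finset.prod_Ioc_consecutive _ (by omega) hi).symm
  have hkey : (∏ s ∈ Finset.Ioc 0 d, (L.θsN 0 - L.θsN s)) • (L.Estar 0 *ᵥ (L.tauA i *ᵥ w))
      = ((∏ k ∈ Finset.Ioc 0 i, f k)
          * ∏ s ∈ Finset.Ioc i d, (L.θsN 0 - L.θsN s)) • w := by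
    rw [← Matrix.smul_mulVec, ← L.lagrange_Es0, hsplitP, _root_.map_mul, ← Matrix.mulVec_mulVec,
      L.lower_all w f hf i hi, Matrix.mulVec_smul, L.poly_w w hfix, Polynomial.eval_prod]
    simp only [Polynomial.eval_sub, Polynomial.eval_X, Polynomial.eval_C]
    rw [smul_smul, mul_comm]
  have hres := congrArg (fun v => (∏ s ∈ Finset.Ioc 0 d, (L.θsN 0 - L.θsN s))⁻¹ • v) hkey
  simp only [smul_smul, inv_mul_cancel₀ hDne, one_smul] at hres
  have hPdne : (∏ s ∈ Finset.Ioc i d, (L.θsN 0 - L.θsN s)) ≠ 0 := L.Δprod_ne i d (le_refl d)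
  have hPine : (∏ s ∈ Finset.Ioc 0 i, (L.θsN 0 - L.θsN s)) ≠ 0 := L.Δprod_ne 0 i hi
  rw [hres, hsplitD]
  congr 1
  field_simp

/-- trace formula: if `E*_0 M ξ*_0 = c ξ*_0` then `tr(M E*_0) = c`. -/
theorem trace_formula (hw : w ≠ 0) (hfix : L.Estar 0 *ᵥ w = w)
    (M : Matrix (Fin (d+1)) (Fin (d+1)) K) (c : K)
    (h : L.Estar 0 *ᵥ (M *ᵥ w) = c • w) : (M * L.Estar 0).trace = c := by
  -- column representation of E*_0
  have hg : ∀ a : Fin (d+1), ∃ g : K, ∀ x, L.Estar 0 x a = g * w x := by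
    intro a
    obtain ⟨g, hg⟩ := L.Es_proj_span 0 w hw hfix (Pi.single a 1)
    refine ⟨g, fun x => ?_⟩
    have := congrFun hg x
    simpa [Matrix.mulVec_single] using this
  choose g hgcol using hg
  obtain ⟨p, hp0⟩ := Function.ne_iff.mp hw
  have hp : w p ≠ 0 := by simpa using hp0
  have hsum : ∑ a, g a * (M *ᵥ w) a = c := by
    have hcomp := congrFun h p
    have : (L.Estar 0 *ᵥ (M *ᵥ w)) p = (∑ a, g a * (M *ᵥ w) a) * w p := by
      rw [Matrix.mulVec, dotProduct]
      rw [Finset.sum_congr rfl (fun a _ => by rw [hgcol a p])]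
      rw [Finset.sum_mul]
      apply Finset.sum_congr rfl
      intro a _
      ring
    rw [this, Pi.smul_apply, smul_eq_mul] at hcomp
    exact mul_right_cancel₀ hp hcomp
  rw [Matrix.trace]
  rw [Finset.sum_congr rfl (fun x (_ : x ∈ Finset.univ) => by
    show (M * L.Estar 0) x x = g x * (M *ᵥ w) x
    rw [Matrix.mul_apply, Matrix.mulVec, dotProduct, Finset.mul_sum]
    apply Finset.sum_congr rfl
    intro b _
    rw [hgcol x b]
    ring)]
  exact hsum

end trace

end LeonardSystem

namespace LeonardSystem

variable {K : Type*} [Field K] {d : ℕ} (L : LeonardSystem K d)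

theorem prod_range_shift (g : ℕ → K) (r : ℕ) :
    ∏ j ∈ Finset.range r, g (j+1) = ∏ k ∈ Finset.Ioc 0 r, g k := by
  induction r with
  | zero => simp
  | succ r ih => rw [Finset.prod_range_succ, ih, Finset.prod_Ioc_succ_top (by omega)]

section varphi

variable (w : Fin (d+1) → K)

theorem trace_tauA_Es0 (hw : w ≠ 0) (hfix : L.Estar 0 *ᵥ w = w) (f : ℕ → K)
    (hf : ∀ j, 1 ≤ j → j ≤ d →
      (L.Astar - L.θsN j • 1) *ᵥ (L.tauA j *ᵥ w) = f j • (L.tauA (j-1) *ᵥ w))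
    {i : ℕ} (hi : i ≤ d) :
    (L.tauA i * L.Estar 0).trace
      = (∏ k ∈ Finset.Ioc 0 i, f k) / (∏ s ∈ Finset.Ioc 0 i, (L.θsN 0 - L.θsN s)) :=
  L.trace_formula w hw hfix _ _ (L.Es0_u w hw hfix f hf hi)

theorem varphi_eq (hw : w ≠ 0) (hfix : L.Estar 0 *ᵥ w = w) (f : ℕ → K)
    (hf : ∀ j, 1 ≤ j → j ≤ d →
      (L.Astar - L.θsN j • 1) *ᵥ (L.tauA j *ᵥ w) = f j • (L.tauA (j-1) *ᵥ w))
    (hfne : ∀ j, 1 ≤ j → j ≤ d → f j ≠ 0) {k : ℕ} (hk1 : 1 ≤ k) (hkd : k ≤ d) :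
    L.varphi k = f k := by
  rw [varphi, L.trace_tauA_Es0 w hw hfix f hf hkd, L.trace_tauA_Es0 w hw hfix f hf (by omega)]
  have hk : k = (k-1)+1 := by omega
  have hFk : (∏ j ∈ Finset.Ioc 0 k, f j) = (∏ j ∈ Finset.Ioc 0 (k-1), f j) * f k := by
    conv_lhs => rw [hk]
    rw [Finset.prod_Ioc_succ_top (by omega), ← hk]
  have hGk : (∏ s ∈ Finset.Ioc 0 k, (L.θsN 0 - L.θsN s))
      = (∏ s ∈ Finset.Ioc 0 (k-1), (L.θsN 0 - L.θsN s)) * (L.θsN 0 - L.θsN k) := by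
    conv_lhs => rw [hk]
    rw [Finset.prod_Ioc_succ_top (by omega), ← hk]
  have hF1 : (∏ j ∈ Finset.Ioc 0 (k-1), f j) ≠ 0 := by
    apply Finset.prod_ne_zero_iff.mpr
    intro s hs
    have hs' := Finset.mem_Ioc.mp hs
    exact hfne s (by omega) (by omega)
  have hG1 : (∏ s ∈ Finset.Ioc 0 (k-1), (L.θsN 0 - L.θsN s)) ≠ 0 := L.Δprod_ne 0 (k-1) (by omega)
  have hΔk : L.θsN 0 - L.θsN k ≠ 0 := by
    rw [L.θsN0]
    exact L.θs_sub_ne hkd (by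
      have h0 : ((0 : Fin (d+1)) : ℕ) = 0 := rfl
      omega)
  rw [hFk, hGk]
  field_simp

theorem varphiProd_eq (hw : w ≠ 0) (hfix : L.Estar 0 *ᵥ w = w) (f : ℕ → K)
    (hf : ∀ j, 1 ≤ j → j ≤ d →
      (L.Astar - L.θsN j • 1) *ᵥ (L.tauA j *ᵥ w) = f j • (L.tauA (j-1) *ᵥ w))
    (hfne : ∀ j, 1 ≤ j → j ≤ d → f j ≠ 0) {r : ℕ} (hr : r ≤ d) :
    L.varphiProd r = ∏ k ∈ Finset.Ioc 0 r, f k := by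
  rw [varphiProd]
  rw [Finset.prod_congr rfl (fun j hj => L.varphi_eq w hw hfix f hf hfne (by omega)
    (by have := Finset.mem_range.mp hj; omega))]
  exact prod_range_shift f r

end varphi

/-- Sandwiching principle for `E*_0 Y E*_0`. -/
theorem Es0_sandwich (w : Fin (d+1) → K) (hw : w ≠ 0) (hfix : L.Estar 0 *ᵥ w = w)
    (Y : Matrix (Fin (d+1)) (Fin (d+1)) K) (c : K)
    (h : L.Estar 0 *ᵥ (Y *ᵥ w) = c • w) :
    L.Estar 0 * Y * L.Estar 0 = c • L.Estar 0 := by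
  have hcol : ∀ a : Fin (d+1), (L.Estar 0 * Y * L.Estar 0) *ᵥ Pi.single a 1
      = (c • L.Estar 0) *ᵥ Pi.single a 1 := by
    intro a
    obtain ⟨g, hg⟩ := L.Es_proj_span 0 w hw hfix (Pi.single a 1)
    rw [← Matrix.mulVec_mulVec, ← Matrix.mulVec_mulVec, hg, Matrix.mulVec_smul,
      Matrix.mulVec_smul, h, Matrix.smul_mulVec, hg, smul_smul, smul_smul, mul_comm]
  ext x a
  have := congrFun (hcol a) x
  simpa [Matrix.mulVec_single] using this

section sigma

variable (σ : (Matrix (Fin (d+1)) (Fin (d+1)) K) →ₗ[K] Matrix (Fin (d+1)) (Fin (d+1)) K)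

theorem sigma_one (hanti : ∀ X Y, σ (X * Y) = σ Y * σ X) (hsurj : Function.Surjective σ) :
    σ 1 = 1 := by
  obtain ⟨U, hU⟩ := hsurj 1
  have h := hanti U 1
  rw [Matrix.mul_one, hU, Matrix.mul_one] at h
  exact h.symm

theorem sigma_pow (hanti : ∀ X Y, σ (X * Y) = σ Y * σ X) (hsurj : Function.Surjective σ)
    (M : Matrix (Fin (d+1)) (Fin (d+1)) K) (hM : σ M = M) (n : ℕ) : σ (M ^ n) = M ^ n := by
  induction n with
  | zero => rw [pow_zero]; exact sigma_one σ hanti hsurj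
  | succ n ih =>
    rw [pow_succ, hanti, ih, hM, ← pow_succ']
    exact pow_succ M n

theorem sigma_aeval (hanti : ∀ X Y, σ (X * Y) = σ Y * σ X) (hsurj : Function.Surjective σ)
    (M : Matrix (Fin (d+1)) (Fin (d+1)) K) (hM : σ M = M) (p : K[X]) :
    σ (Polynomial.aeval M p) = Polynomial.aeval M p := by
  induction p using Polynomial.induction_on' with
  | add p q hp hq => rw [map_add, map_add σ, hp, hq]
  | monomial n a =>
    rw [Polynomial.aeval_monomial, ← Algebra.smul_def, LinearMap.map_smul,
      sigma_pow σ hanti hsurj M hM n]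

theorem sigma_E0 (hanti : ∀ X Y, σ (X * Y) = σ Y * σ X) (hsurj : Function.Surjective σ)
    (hA : σ L.A = L.A) : σ (L.E 0) = L.E 0 := by
  obtain ⟨p, hp⟩ := L.dual.Estar_eq_aeval 0
  simp only [dual_Astar, dual_Estar] at hp
  rw [← hp]
  exact sigma_aeval σ hanti hsurj L.A hA p

end sigma

end LeonardSystem

/-- `(1/tr(E_0E*_0)) (E*_0 E_0 τ*_r(A*)/(φ_1⋯φ_r)) τ_i(A) E*_0 = δ_{ri} E*_0`,
and the transition map from the basis `{τ_i(A)ξ*_0}` sending it to `{X_i ξ_0}`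
for each of the six dual families of `X`'s. -/
theorem LeonardSystem.transition_from_tauixs0 {K : Type*} [Field K] {d : ℕ}
    (L : LeonardSystem K d)
    (σ : (Matrix (Fin (d+1)) (Fin (d+1)) K) →ₗ[K] Matrix (Fin (d+1)) (Fin (d+1)) K)
    (hanti : ∀ X Y, σ (X * Y) = σ Y * σ X) (hbij : Function.Bijective σ)
    (hA : σ L.A = L.A) (hAs : σ L.Astar = L.Astar)
    (B : (Fin (d+1) → K) →ₗ[K] (Fin (d+1) → K) →ₗ[K] K) (hB : B ≠ 0)
    (hcomp : ∀ (X : Matrix (Fin (d+1)) (Fin (d+1)) K) (u v : Fin (d+1) → K),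
      B (X.mulVec u) v = B u ((σ X).mulVec v))
    (ξ0 ξs0 : Fin (d+1) → K) (hξ0 : ξ0 ≠ 0) (hξs0 : ξs0 ≠ 0)
    (hE0 : (L.E 0).mulVec ξ0 = ξ0) (hEs0 : (L.Estar 0).mulVec ξs0 = ξs0) :
    (∀ r i : Fin (d+1),
      (((L.E 0 * L.Estar 0).trace)⁻¹ * (L.varphiProd (r : ℕ))⁻¹) •
        (L.Estar 0 * L.E 0 * L.tausA (r : ℕ) * L.tauA (i : ℕ) * L.Estar 0) =
      if r = i then L.Estar 0 else 0) ∧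
    (∀ X : Fin (d+1) → Matrix (Fin (d+1)) (Fin (d+1)) K,
      (X = L.Estar ∨ X = (fun i => L.Estar i.rev) ∨ X = (fun (i : Fin (d+1)) => L.tausA (i : ℕ)) ∨
       X = (fun (i : Fin (d+1)) => L.tausA (d - (i : ℕ))) ∨ X = (fun (i : Fin (d+1)) => L.etasA (i : ℕ)) ∨
       X = (fun (i : Fin (d+1)) => L.etasA (d - (i : ℕ)))) →
      ∀ i : Fin (d+1),
        (B ξ0 ξ0 / B ξ0 ξs0) •
          (∑ r : Fin (d+1), (L.varphiProd (r : ℕ))⁻¹ • (X r * L.E 0 * L.tausA (r : ℕ))).mulVec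
            ((L.tauA (i : ℕ)).mulVec ξs0) = (X i).mulVec ξ0) := by
  classical
  obtain ⟨f, hf⟩ := L.exists_phihat ξs0 hξs0 hEs0
  have hfne := L.phihat_ne ξs0 hξs0 hEs0 f hf
  obtain ⟨μ, hμ⟩ := L.E_proj_span 0 ξ0 hξ0 hE0 ξs0
  have hμne : μ ≠ 0 := by
    intro h0
    apply L.E_w_ne ξs0 hξs0 hEs0 0
    rw [hμ, h0, zero_smul]
  obtain ⟨ν, hν⟩ := L.Es_proj_span 0 ξs0 hξs0 hEs0 ξ0
  have hνne : ν ≠ 0 := by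
    intro h0
    have hdual := L.dual.E_w_ne ξ0 hξ0 hE0 0
    apply hdual
    show L.Estar 0 *ᵥ ξ0 = 0
    rw [hν, h0, zero_smul]
  have htr : (L.E 0 * L.Estar 0).trace = μ * ν := by
    apply L.trace_formula ξs0 hξs0 hEs0
    rw [hμ, Matrix.mulVec_smul, hν, smul_smul]
  have hμνne : μ * ν ≠ 0 := mul_ne_zero hμne hνne
  have hfprod : ∀ r : Fin (d+1), (∏ k ∈ Finset.Ioc 0 (r:ℕ), f k) ≠ 0 := by
    intro r
    apply Finset.prod_ne_zero_iff.mpr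
    intro s hs
    have hs' := Finset.mem_Ioc.mp hs
    exact hfne s hs'.1 (by omega)
  constructor
  · -- part 1
    intro r i
    have hcoll := L.collapse ξs0 hξs0 hEs0 f hf (r := (r:ℕ)) (i := (i:ℕ)) (by omega) (by omega)
    have hsand : L.Estar 0 *ᵥ ((L.E 0 * L.tausA (r:ℕ) * L.tauA (i:ℕ)) *ᵥ ξs0)
        = (if (r:ℕ) = (i:ℕ) then (∏ k ∈ Finset.Ioc 0 (r:ℕ), f k) * (μ * ν) else 0) • ξs0 := by
      rw [← Matrix.mulVec_mulVec, ← Matrix.mulVec_mulVec, hcoll]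
      by_cases hri : (r:ℕ) = (i:ℕ)
      · rw [if_pos hri, if_pos hri, Matrix.mulVec_smul, hμ, Matrix.mulVec_smul, hν,
          smul_smul, smul_smul]
        congr 1
        ring
      · rw [if_neg hri, if_neg hri, Matrix.mulVec_zero, zero_smul]
    have hmat := L.Es0_sandwich ξs0 hξs0 hEs0 _ _ hsand
    have hassoc : L.Estar 0 * L.E 0 * L.tausA (r:ℕ) * L.tauA (i:ℕ) * L.Estar 0
        = L.Estar 0 * (L.E 0 * L.tausA (r:ℕ) * L.tauA (i:ℕ)) * L.Estar 0 := by
      simp only [Matrix.mul_assoc]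
    rw [hassoc, hmat, htr, L.varphiProd_eq ξs0 hξs0 hEs0 f hf hfne (by omega : (r:ℕ) ≤ d)]
    by_cases hri : r = i
    · rw [if_pos (show (r:ℕ) = (i:ℕ) by rw [hri]), if_pos hri, smul_smul]
      have hFne := hfprod r
      rw [show ((μ * ν)⁻¹ * (∏ k ∈ Finset.Ioc 0 (r:ℕ), f k)⁻¹)
          * ((∏ k ∈ Finset.Ioc 0 (r:ℕ), f k) * (μ * ν)) = 1 by
        field_simp]
      rw [one_smul]
    · rw [if_neg (fun hc => hri (Fin.ext hc)), if_neg hri, zero_smul, smul_zero]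
  · -- part 2
    intro X _ i
    have hσE0 := L.sigma_E0 σ hanti hbij.2 hA
    have hBrs : B ξ0 ξs0 = μ * B ξ0 ξ0 := by
      have h1 : B ξ0 ξs0 = B ((L.E 0).mulVec ξ0) ξs0 := by rw [hE0]
      rw [h1, hcomp, hσE0]
      show B ξ0 (L.E 0 *ᵥ ξs0) = _
      rw [hμ, LinearMap.map_smul, smul_eq_mul]
    have hBne : B ξ0 ξ0 ≠ 0 := by
      have hBex : ∃ v, B ξ0 v ≠ 0 := by
        by_contra hcon
        push_neg at hcon
        apply hB
        have hall : ∀ u v, B u v = 0 := by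
          intro u v
          obtain ⟨p, hp0⟩ := Function.ne_iff.mp hξ0
          have hp : ξ0 p ≠ 0 := by simpa using hp0
          have hXu : (Matrix.of fun a b => u a * (if b = p then (ξ0 p)⁻¹ else 0)) *ᵥ ξ0
              = u := by
            funext a
            simp only [Matrix.mulVec, dotProduct, Matrix.of_apply, ite_mul, mul_ite,
              mul_zero, zero_mul]
            rw [Finset.sum_ite_eq' Finset.univ p
              (fun b => u a * (ξ0 p)⁻¹ * ξ0 b), if_pos (Finset.mem_univ p)]
            field_simp
          calc B u v = B ((Matrix.of fun a b => u a * (if b = p then (ξ0 p)⁻¹ else 0)) *ᵥ ξ0) v := by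
                rw [hXu]
            _ = B ξ0 ((σ (Matrix.of fun a b => u a * (if b = p then (ξ0 p)⁻¹ else 0))) *ᵥ v) := by
                rw [hcomp]
            _ = 0 := hcon _
        exact LinearMap.ext (fun u => LinearMap.ext (fun v => hall u v))
      obtain ⟨v, hv⟩ := hBex
      obtain ⟨lam, hlam⟩ := L.E_proj_span 0 ξ0 hξ0 hE0 v
      intro h0
      apply hv
      have h1 : B ξ0 v = B ((L.E 0).mulVec ξ0) v := by rw [hE0]
      rw [h1, hcomp, hσE0]
      show B ξ0 (L.E 0 *ᵥ v) = 0
      rw [hlam, LinearMap.map_smul, smul_eq_mul, h0, mul_zero]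
    have hcoefμ : B ξ0 ξ0 / B ξ0 ξs0 = μ⁻¹ := by
      rw [hBrs]
      rw [div_eq_iff (mul_ne_zero hμne hBne)]
      field_simp
    -- collapse the sum
    have hterm : ∀ r : Fin (d+1),
        (L.varphiProd (r:ℕ))⁻¹ • ((X r * L.E 0 * L.tausA (r:ℕ)) *ᵥ ((L.tauA (i:ℕ)) *ᵥ ξs0))
        = if r = i then μ • (X i *ᵥ ξ0) else 0 := by
      intro r
      have hcoll := L.collapse ξs0 hξs0 hEs0 f hf (r := (r:ℕ)) (i := (i:ℕ)) (by omega) (by omega)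
      rw [← Matrix.mulVec_mulVec, ← Matrix.mulVec_mulVec, hcoll]
      by_cases hri : r = i
      · subst hri
        rw [if_pos rfl, if_pos rfl, hμ, Matrix.mulVec_smul, Matrix.mulVec_smul,
          L.varphiProd_eq ξs0 hξs0 hEs0 f hf hfne (by omega : (r:ℕ) ≤ d),
          smul_smul, smul_smul]
        congr 1
        have hFne := hfprod r
        field_simp
      · rw [if_neg (fun hc => hri (Fin.ext hc)), Matrix.mulVec_zero, smul_zero, if_neg hri]
    show (B ξ0 ξ0 / B ξ0 ξs0) • (∑ r : Fin (d+1),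
        (L.varphiProd (r:ℕ))⁻¹ • (X r * L.E 0 * L.tausA (r:ℕ))) *ᵥ ((L.tauA (i:ℕ)) *ᵥ ξs0)
        = X i *ᵥ ξ0
    rw [LeonardSystem.sum_mulVec']
    rw [Finset.sum_congr rfl (fun r _ => Matrix.smul_mulVec _ _ _)]
    rw [Finset.sum_congr rfl (fun r (_ : r ∈ Finset.univ) => hterm r)]
    rw [Finset.sum_ite_eq' Finset.univ i (fun _ => μ • (X i *ᵥ ξ0)),
      if_pos (Finset.mem_univ i), hcoefμ, smul_smul, inv_mul_cancel₀ hμne, one_smul]
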